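/- arXiv:1212.1605 — 2 statements merged into one kernel-verified Lean document; each statement's English description precedes it below -/
import Mathlib

section
/- Let 𝖠 ⊆ ℝ^d be an s-regular open set and let 𝗏₁, 𝗏₂ ∈ ∂𝖠 with ‖𝗏₁ − 𝗏₂‖ ≤ s/200. Suppose that for i = 1, 2, 𝖼_i ∈ ℝ^d is such that the closed ball 𝖡(𝖼_i, s) satisfies 𝖡(𝖼_i, s) ⊆ ℝ^d ∖ 𝖠 and ∂𝖠 ∩ 𝖡(𝖼_i, s) = {𝗏_i} (i.e. it is an outer tangent ball at 𝗏_i). Then ‖𝖼₁ − 𝖼₂‖ ≤ ((1 + √799)/200)·s, and in particular ‖𝖼₁ − 𝖼₂‖ < s/6. The same bound holds for the centers of inner tangent balls (balls of radius s contained in closure(𝖠) touching ∂𝖠 exactly at 𝗏_i). -/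
noncomputable section

open Set Metric

/-- An open set `D ⊆ ℝ^d` is `s`-regular when every boundary point can be touched from
inside and from outside by closed balls of radius `s` meeting the boundary only there. -/
def SReg (d : ℕ) (s : ℝ) (D : Set (EuclideanSpace ℝ (Fin d))) : Prop :=
  IsOpen D ∧
  ∀ x ∈ frontier D, ∃ cin cout : EuclideanSpace ℝ (Fin d),
    closedBall cin s ⊆ closure D ∧ closedBall cout s ⊆ Dᶜ ∧
    frontier D ∩ closedBall cin s = {x} ∧ frontier D ∩ closedBall cout s = {x}

lemma closedBall_not_subset_singleton {E : Type*} [NormedAddCommGroup E] [NormedSpace ℝ E]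
    [Nontrivial E] {m v : E} {r : ℝ} (hr : 0 < r) (h : closedBall m r ⊆ {v}) : False := by
  obtain ⟨x, hx⟩ := exists_ne (0 : E)
  have hxnorm : 0 < ‖x‖ := norm_pos_iff.mpr hx
  have hene : (r / ‖x‖) • x ≠ 0 := smul_ne_zero (ne_of_gt (div_pos hr hxnorm)) hx
  have hm : m ∈ closedBall m r := mem_closedBall_self hr.le
  have h2 : m + (r / ‖x‖) • x ∈ closedBall m r := by
    rw [mem_closedBall, dist_eq_norm]
    simp only [add_sub_cancel_left, norm_smul, Real.norm_eq_abs,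
      abs_of_pos (div_pos hr hxnorm)]
    rw [div_mul_cancel₀ _ (ne_of_gt hxnorm)]
  have h3 : m + (r / ‖x‖) • x = v := h h2
  have h4 : m = v := h hm
  apply hene
  have h5 : m + (r / ‖x‖) • x = m := by rw [h3, h4]
  simpa using h5

lemma aux_key {E : Type*} [NormedAddCommGroup E] [InnerProductSpace ℝ E] [Nontrivial E]
    {s : ℝ} (hs : 0 < s) {b c₁ c₂ v₁ v₂ : E}
    (hbv : dist b v₁ ≤ s) (hc1 : dist c₁ v₁ ≤ s) (hc2 : dist c₂ v₂ ≤ s)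
    (h1 : closedBall b s ∩ closedBall c₁ s ⊆ {v₁})
    (h2 : closedBall b s ∩ closedBall c₂ s ⊆ {v₂})
    (hv : dist v₁ v₂ ≤ s / 200) :
    dist c₁ c₂ ≤ Real.sqrt 802 / 200 * s := by
  have hbc1 : dist b c₁ ≤ 2 * s := by
    calc dist b c₁ ≤ dist b v₁ + dist v₁ c₁ := dist_triangle _ _ _
    _ ≤ s + s := by rw [dist_comm v₁ c₁]; linarith
    _ = 2 * s := by ring
  -- v₁ is the midpoint of b and c₁
  have hmid : midpoint ℝ b c₁ = v₁ := by
    apply h1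
    refine ⟨?_, ?_⟩
    · rw [mem_closedBall, dist_midpoint_left]
      simp only [Real.norm_ofNat]
      linarith
    · rw [mem_closedBall, dist_midpoint_right]
      simp only [Real.norm_ofNat]
      linarith
  have hb : b = v₁ + v₁ - c₁ := by
    have h := hmid
    rw [midpoint_eq_smul_add] at h
    have h2' : (2 : ℝ) • ((⅟2 : ℝ) • (b + c₁)) = (2 : ℝ) • v₁ := by rw [h]
    rw [smul_invOf_smul, two_smul] at h2'
    have h3' : b + c₁ = v₁ + v₁ := h2'
    linear_combination (norm := abel) h3'
  -- the ball at b and the ball at c₂ are (essentially) disjoint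
  have hbc2 : 2 * s ≤ dist b c₂ := by
    by_contra hlt
    push_neg at hlt
    have hrpos : (0:ℝ) < s - dist b c₂ / 2 := by linarith
    apply closedBall_not_subset_singleton hrpos (v := v₂) (m := midpoint ℝ b c₂)
    intro x hx
    rw [mem_closedBall] at hx
    have hmb : dist (midpoint ℝ b c₂) b = 2⁻¹ * dist b c₂ := by
      rw [dist_midpoint_left]; norm_num
    have hmc : dist (midpoint ℝ b c₂) c₂ = 2⁻¹ * dist b c₂ := by
      rw [dist_midpoint_right]; norm_num
    apply h2
    refine ⟨mem_closedBall.mpr ?_, mem_closedBall.mpr ?_⟩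
    · calc dist x b ≤ dist x (midpoint ℝ b c₂) + dist (midpoint ℝ b c₂) b :=
        dist_triangle _ _ _
      _ ≤ s := by rw [hmb]; linarith
    · calc dist x c₂ ≤ dist x (midpoint ℝ b c₂) + dist (midpoint ℝ b c₂) c₂ :=
        dist_triangle _ _ _
      _ ≤ s := by rw [hmc]; linarith
  -- algebra via the parallelogram law
  have hupw : ‖(v₁ - c₁) + (v₁ - c₂)‖ = dist b c₂ := by
    rw [dist_eq_norm, hb]
    congr 1
    abel
  have humw : ‖(v₁ - c₁) - (v₁ - c₂)‖ = dist c₁ c₂ := by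
    rw [dist_eq_norm]
    rw [show v₁ - c₁ - (v₁ - c₂) = -(c₁ - c₂) by abel, norm_neg]
  have hun : ‖v₁ - c₁‖ ≤ s := by rw [← dist_eq_norm, dist_comm]; exact hc1
  have hwn : ‖v₁ - c₂‖ ≤ s + s / 200 := by
    rw [← dist_eq_norm]
    calc dist v₁ c₂ ≤ dist v₁ v₂ + dist v₂ c₂ := dist_triangle _ _ _
    _ ≤ s / 200 + s := by rw [dist_comm v₂ c₂]; linarith
    _ = s + s / 200 := by ring
  have hpar := parallelogram_law_with_norm ℝ (v₁ - c₁) (v₁ - c₂)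
  have hkey : dist c₁ c₂ ^ 2 ≤ 802 / 40000 * s ^ 2 := by
    rw [← humw]
    have h1' : 2 * s ≤ ‖(v₁ - c₁) + (v₁ - c₂)‖ := by rw [hupw]; exact hbc2
    nlinarith [norm_nonneg ((v₁ - c₁) + (v₁ - c₂)), norm_nonneg (v₁ - c₁),
      norm_nonneg (v₁ - c₂), norm_nonneg ((v₁ - c₁) - (v₁ - c₂))]
  have hq : (0 : ℝ) ≤ Real.sqrt 802 / 200 * s := by positivity
  have hq2 : (Real.sqrt 802 / 200 * s) ^ 2 = 802 / 40000 * s ^ 2 := by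
    rw [mul_pow, div_pow, Real.sq_sqrt (by norm_num : (802:ℝ) ≥ 0)]
    ring
  nlinarith [dist_nonneg (x := c₁) (y := c₂)]

lemma sqrt_bounds {s : ℝ} (hs : 0 < s) {x : ℝ} (hx : x ≤ Real.sqrt 802 / 200 * s) :
    x ≤ ((1 + Real.sqrt 799) / 200) * s ∧ x < s / 6 := by
  have h799 : (1 : ℝ) ≤ Real.sqrt 799 := by
    rw [show (1:ℝ) = Real.sqrt 1 by rw [Real.sqrt_one]]
    exact Real.sqrt_le_sqrt (by norm_num)
  have h1 : Real.sqrt 802 ≤ 1 + Real.sqrt 799 := by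
    rw [show (802 : ℝ) = 802 by norm_num]
    have : (802 : ℝ) ≤ (1 + Real.sqrt 799) ^ 2 := by
      have := Real.sq_sqrt (by norm_num : (799:ℝ) ≥ 0)
      nlinarith
    calc Real.sqrt 802 ≤ Real.sqrt ((1 + Real.sqrt 799) ^ 2) := Real.sqrt_le_sqrt this
    _ = 1 + Real.sqrt 799 := Real.sqrt_sq (by linarith)
  have h2 : Real.sqrt 799 < 97 / 3 := by
    rw [Real.sqrt_lt' (by norm_num)]
    norm_num
  constructor
  · calc x ≤ Real.sqrt 802 / 200 * s := hx
    _ ≤ ((1 + Real.sqrt 799) / 200) * s := by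
        apply mul_le_mul_of_nonneg_right _ hs.le
        linarith
  · calc x ≤ Real.sqrt 802 / 200 * s := hx
    _ ≤ ((1 + Real.sqrt 799) / 200) * s := by
        apply mul_le_mul_of_nonneg_right _ hs.le
        linarith
    _ < s / 6 := by nlinarith

/-- **Centers of tangent balls at nearby boundary points of an `s`-regular set are close**
(Lemma 6.3 of Popov–Teixeira, "Soft local times and decoupling of random
interlacements"). -/
theorem stmt_11 (d : ℕ) (s : ℝ) (hs : 0 < s)
    (A : Set (EuclideanSpace ℝ (Fin d))) (hA : SReg d s A)
    (v₁ v₂ : EuclideanSpace ℝ (Fin d))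
    (hv₁ : v₁ ∈ frontier A) (hv₂ : v₂ ∈ frontier A)
    (hclose : dist v₁ v₂ ≤ s / 200) :
    -- outer tangent balls
    (∀ c₁ c₂ : EuclideanSpace ℝ (Fin d),
      closedBall c₁ s ⊆ Aᶜ → frontier A ∩ closedBall c₁ s = {v₁} →
      closedBall c₂ s ⊆ Aᶜ → frontier A ∩ closedBall c₂ s = {v₂} →
      dist c₁ c₂ ≤ ((1 + Real.sqrt 799) / 200) * s ∧ dist c₁ c₂ < s / 6) ∧
    -- inner tangent balls
    (∀ c₁ c₂ : EuclideanSpace ℝ (Fin d),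
      closedBall c₁ s ⊆ closure A → frontier A ∩ closedBall c₁ s = {v₁} →
      closedBall c₂ s ⊆ closure A → frontier A ∩ closedBall c₂ s = {v₂} →
      dist c₁ c₂ ≤ ((1 + Real.sqrt 799) / 200) * s ∧ dist c₁ c₂ < s / 6) := by
  obtain ⟨hAopen, hreg⟩ := hA
  have hfront : ∀ x : EuclideanSpace ℝ (Fin d),
      x ∈ closure A → x ∈ Aᶜ → x ∈ frontier A := by
    intro x h1 h2
    rw [hAopen.frontier_eq]
    exact ⟨h1, h2⟩
  rcases Nat.eq_zero_or_pos d with hd | hd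
  · -- degenerate case d = 0: the space is a single point
    subst hd
    haveI : Subsingleton (EuclideanSpace ℝ (Fin 0)) :=
      ⟨fun a b => PiLp.ext fun i => (i : Fin 0).elim0⟩
    have hzero : ∀ c₁ c₂ : EuclideanSpace ℝ (Fin 0), dist c₁ c₂ = 0 := by
      intro c₁ c₂
      rw [Subsingleton.elim c₁ c₂, dist_self]
    have hsq : (0:ℝ) ≤ Real.sqrt 799 := Real.sqrt_nonneg _
    constructor <;>
    · intro c₁ c₂ _ _ _ _
      rw [hzero c₁ c₂]
      constructor
      · positivity
      · positivity
  · haveI : Nontrivial (EuclideanSpace ℝ (Fin d)) := by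
      refine ⟨⟨EuclideanSpace.single ⟨0, hd⟩ 1, 0, ?_⟩⟩
      intro h
      have := congrArg norm h
      rw [EuclideanSpace.norm_single, norm_zero] at this
      norm_num at this
    obtain ⟨cin, cout, hin_sub, hout_sub, hin_f, hout_f⟩ := hreg v₁ hv₁
    have hvin : v₁ ∈ closedBall cin s := by
      have : v₁ ∈ frontier A ∩ closedBall cin s := by rw [hin_f]; rfl
      exact this.2
    have hvout : v₁ ∈ closedBall cout s := by
      have : v₁ ∈ frontier A ∩ closedBall cout s := by rw [hout_f]; rfl
      exact this.2
    constructor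
    · -- outer tangent balls: use the inner ball at v₁ as the "other side" ball
      intro c₁ c₂ h₁c h₁f h₂c h₂f
      have hv₁c₁ : v₁ ∈ closedBall c₁ s := by
        have : v₁ ∈ frontier A ∩ closedBall c₁ s := by rw [h₁f]; rfl
        exact this.2
      have hv₂c₂ : v₂ ∈ closedBall c₂ s := by
        have : v₂ ∈ frontier A ∩ closedBall c₂ s := by rw [h₂f]; rfl
        exact this.2
      have key := aux_key hs (b := cin) (c₁ := c₁) (c₂ := c₂) (v₁ := v₁) (v₂ := v₂)
        (by rw [dist_comm]; exact mem_closedBall.mp hvin)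
        (by rw [dist_comm]; exact mem_closedBall.mp hv₁c₁)
        (by rw [dist_comm]; exact mem_closedBall.mp hv₂c₂)
        (by
          intro x hx
          have hxf : x ∈ frontier A := hfront x (hin_sub hx.1) (h₁c hx.2)
          rw [← h₁f]
          exact ⟨hxf, hx.2⟩)
        (by
          intro x hx
          have hxf : x ∈ frontier A := hfront x (hin_sub hx.1) (h₂c hx.2)
          rw [← h₂f]
          exact ⟨hxf, hx.2⟩)
        hclose
      exact sqrt_bounds hs key
    · -- inner tangent balls: use the outer ball at v₁
      intro c₁ c₂ h₁c h₁f h₂c h₂f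
      have hv₁c₁ : v₁ ∈ closedBall c₁ s := by
        have : v₁ ∈ frontier A ∩ closedBall c₁ s := by rw [h₁f]; rfl
        exact this.2
      have hv₂c₂ : v₂ ∈ closedBall c₂ s := by
        have : v₂ ∈ frontier A ∩ closedBall c₂ s := by rw [h₂f]; rfl
        exact this.2
      have key := aux_key hs (b := cout) (c₁ := c₁) (c₂ := c₂) (v₁ := v₁) (v₂ := v₂)
        (by rw [dist_comm]; exact mem_closedBall.mp hvout)
        (by rw [dist_comm]; exact mem_closedBall.mp hv₁c₁)
        (by rw [dist_comm]; exact mem_closedBall.mp hv₂c₂)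
        (by
          intro x hx
          have hxf : x ∈ frontier A := hfront x (h₁c hx.2) (hout_sub hx.1)
          rw [← h₁f]
          exact ⟨hxf, hx.2⟩)
        (by
          intro x hx
          have hxf : x ∈ frontier A := hfront x (h₂c hx.2) (hout_sub hx.1)
          rw [← h₂f]
          exact ⟨hxf, hx.2⟩)
        hclose
      exact sqrt_bounds hs key
end
end

section
/- For every d ≥ 1 there exist (large enough) constants s₀ > 0 and h₀ ∈ ℕ with the following property: if 𝖠 ⊆ ℝ^d is an s-regular open set for some s ≥ s₀, A = 𝖠 ∩ ℤ^d, and x, y ∈ ℤ^d ∖ A satisfy ‖x − y‖ ≤ 3√d, then there exists a nearest-neighbor path in ℤ^d from x to y of length at most h₀ that does not intersect A. -/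
noncomputable section

open Set Metric

/-- The lattice `ℤ^d`. -/
abbrev ZD (d : ℕ) := Fin d → ℤ

/-- The natural embedding of `ℤ^d` into `ℝ^d` with the Euclidean metric. -/
def toE {d : ℕ} (x : ZD d) : EuclideanSpace ℝ (Fin d) := WithLp.toLp 2 (fun i => (x i : ℝ))

/-- Euclidean distance between lattice points. -/
def eucDist {d : ℕ} (x y : ZD d) : ℝ := dist (toE x) (toE y)

/-- Two lattice points are neighbours when their Euclidean distance is exactly `1`. -/
def latAdj {d : ℕ} (x y : ZD d) : Prop := eucDist x y = 1

namespace PT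

variable {d : ℕ}

lemma latAdj_update (z : ZD d) (j : Fin d) (e : ℤ) (he : e = 1 ∨ e = -1) :
    latAdj z (Function.update z j (z j + e)) := by
  unfold latAdj eucDist
  rw [EuclideanSpace.dist_eq]
  have : ∀ i : Fin d, (dist (toE z i) (toE (Function.update z j (z j + e)) i))^2
      = if i = j then 1 else 0 := by
    intro i
    by_cases h : i = j
    · subst h
      simp only [toE, PiLp.toLp_apply, Function.update_self, if_pos rfl, Real.dist_eq]
      rcases he with rfl | rfl <;> push_cast <;> ring_nf <;> norm_num
    · simp [toE, Function.update_of_ne h, Real.dist_eq, h]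
  rw [Finset.sum_congr rfl (fun i _ => this i)]
  simp

/-- Monotone lattice path: from `x` to `y` in `∑ |yᵢ - xᵢ|` steps, all points
coordinatewise between `x` and `y`. -/
lemma monoPath : ∀ (n : ℕ) (x y : ZD d), (∑ i, (y i - x i).natAbs) = n →
    ∃ p : ℕ → ZD d, p 0 = x ∧ p n = y ∧ (∀ k < n, latAdj (p k) (p (k+1))) ∧
      ∀ k ≤ n, ∀ i, (x i ≤ p k i ∧ p k i ≤ y i) ∨ (y i ≤ p k i ∧ p k i ≤ x i) := by
  intro n
  induction n with
  | zero =>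
    intro x y h
    have hxy : x = y := by
      funext i
      have h2 := Finset.sum_eq_zero_iff.mp h i (Finset.mem_univ i)
      omega
    subst hxy
    exact ⟨fun _ => x, rfl, rfl, fun k hk => by omega, fun k _ i => Or.inl ⟨le_rfl, le_rfl⟩⟩
  | succ n ih =>
    intro x y h
    have hne : ∃ i₀ : Fin d, (y i₀ - x i₀).natAbs ≠ 0 := by
      by_contra hc
      push_neg at hc
      have : (∑ i, (y i - x i).natAbs) = 0 := Finset.sum_eq_zero fun i _ => hc i
      omega
    obtain ⟨i₀, hi₀⟩ := hne
    have hsign : (y i₀ - x i₀).sign = 1 ∨ (y i₀ - x i₀).sign = -1 := by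
      rcases lt_or_gt_of_ne (show y i₀ - x i₀ ≠ 0 by omega) with h1 | h1
      · right; exact Int.sign_eq_neg_one_of_neg h1
      · left; exact Int.sign_eq_one_of_pos h1
    set e := (y i₀ - x i₀).sign with he
    have hestep : (y i₀ - (x i₀ + e)).natAbs = (y i₀ - x i₀).natAbs - 1 := by
      rcases lt_or_gt_of_ne (show y i₀ - x i₀ ≠ 0 by omega) with h1 | h1
      · have hs : e = -1 := by rw [he]; exact Int.sign_eq_neg_one_of_neg h1
        rw [hs]; omega
      · have hs : e = 1 := by rw [he]; exact Int.sign_eq_one_of_pos h1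
        rw [hs]; omega
    set x' := Function.update x i₀ (x i₀ + e) with hx'
    have hkey : ∀ (g : Fin d → ℕ), (∑ i, g i) = g i₀ + ∑ i ∈ Finset.univ.erase i₀, g i :=
      fun g => (Finset.add_sum_erase _ g (Finset.mem_univ i₀)).symm
    have hrest : (∑ i ∈ Finset.univ.erase i₀, (y i - x' i).natAbs)
        = ∑ i ∈ Finset.univ.erase i₀, (y i - x i).natAbs := by
      refine Finset.sum_congr rfl fun i hi => ?_
      rw [hx', Function.update_of_ne (Finset.ne_of_mem_erase hi)]
    have hsum' : (∑ i, (y i - x' i).natAbs) = n := by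
      rw [hkey (fun i => (y i - x' i).natAbs), hrest, hx', Function.update_self, hestep]
      rw [hkey (fun i => (y i - x i).natAbs)] at h
      omega
    obtain ⟨q, hq0, hqn, hqadj, hqbtw⟩ := ih x' y hsum'
    have hbtw' : ∀ i, (x i ≤ x' i ∧ x' i ≤ y i) ∨ (y i ≤ x' i ∧ x' i ≤ x i) := by
      intro i
      by_cases hii : i = i₀
      · subst hii
        rw [hx', Function.update_self]
        rcases lt_or_gt_of_ne (show y i - x i ≠ 0 by omega) with h1 | h1
        · have hs : e = -1 := by rw [he]; exact Int.sign_eq_neg_one_of_neg h1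
          rw [hs]; omega
        · have hs : e = 1 := by rw [he]; exact Int.sign_eq_one_of_pos h1
          rw [hs]; omega
      · rw [hx', Function.update_of_ne hii]; omega
    refine ⟨fun k => match k with | 0 => x | (k+1) => q k, rfl, hqn, ?_, ?_⟩
    · intro k hk
      match k with
      | 0 =>
        show latAdj x (q 0)
        rw [hq0, hx']
        exact latAdj_update x i₀ e hsign
      | (k+1) =>
        exact hqadj k (by omega)
    · intro k hk i
      match k with
      | 0 => simp; omega
      | (k+1) =>
        have h1 := hqbtw k (by omega) i
        have h2 := hbtw' i
        simp only
        omega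

def Btw (x y z : ZD d) : Prop := ∀ i, (x i ≤ z i ∧ z i ≤ y i) ∨ (y i ≤ z i ∧ z i ≤ x i)

lemma norm_sub_le_of_btw {x y z : ZD d} (h : Btw x y z) :
    ‖toE z - toE x‖ ≤ ‖toE y - toE x‖ := by
  rw [show toE z - toE x = (WithLp.toLp 2 (fun i => ((z i : ℝ) - x i)) : EuclideanSpace ℝ (Fin d)) from rfl,
    show toE y - toE x = (WithLp.toLp 2 (fun i => ((y i : ℝ) - x i)) : EuclideanSpace ℝ (Fin d)) from rfl,
    EuclideanSpace.norm_eq, EuclideanSpace.norm_eq]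
  apply Real.sqrt_le_sqrt
  apply Finset.sum_le_sum
  intro i _
  have hz : (z i - x i)^2 ≤ (y i - x i)^2 := by
    rcases h i with ⟨h1, h2⟩ | ⟨h1, h2⟩ <;> nlinarith
  rw [Real.norm_eq_abs, Real.norm_eq_abs, sq_abs, sq_abs]
  show ((z i:ℝ) - (x i:ℝ))^2 ≤ ((y i:ℝ) - (x i:ℝ))^2
  exact_mod_cast hz

def GoodPath (A : Set (EuclideanSpace ℝ (Fin d))) (x y : ZD d) (n : ℕ) : Prop :=
  ∃ p : ℕ → ZD d, p 0 = x ∧ p n = y ∧ (∀ k < n, latAdj (p k) (p (k+1))) ∧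
    ∀ k ≤ n, toE (p k) ∉ A

lemma GoodPath.trans {A : Set (EuclideanSpace ℝ (Fin d))} {x z y : ZD d} {a b : ℕ}
    (h1 : GoodPath A x z a) (h2 : GoodPath A z y b) : GoodPath A x y (a + b) := by
  obtain ⟨p, hp0, hpa, hpadj, hpA⟩ := h1
  obtain ⟨q, hq0, hqb, hqadj, hqA⟩ := h2
  refine ⟨fun k => if k < a then p k else q (k - a), ?_, ?_, ?_, ?_⟩
  · by_cases h : 0 < a
    · simp [h, hp0]
    · have ha : a = 0 := by omega
      simp only [if_neg h]
      rw [Nat.zero_sub, hq0, ← hpa, ha, hp0]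
  · have : ¬ (a + b < a) := by omega
    simp [this, hqb]
  · intro k hk
    by_cases hk1 : k + 1 < a
    · have : k < a := by omega
      simp [this, hk1]
      exact hpadj k (by omega)
    · by_cases hk2 : k < a
      · have hka : k + 1 = a := by omega
        simp [hk2, hk1, hka, hq0, ← hpa]
        have h5 := hpadj k (by omega)
        rwa [hka] at h5
      · simp [hk1, hk2]
        have : k - a + 1 = k + 1 - a := by omega
        rw [← this]
        exact hqadj (k - a) (by omega)
  · intro k hk
    by_cases h : k < a
    · simp only [if_pos h]; exact hpA k (by omega)
    · simp only [if_neg h]; exact hqA (k - a) (by omega)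

lemma sum_natAbs_le_dist_sq (x y : ZD d) :
    ((∑ i, (y i - x i).natAbs : ℕ) : ℝ) ≤ dist (toE x) (toE y)^2 := by
  rw [EuclideanSpace.dist_eq, Real.sq_sqrt (Finset.sum_nonneg fun i _ => sq_nonneg _)]
  push_cast
  apply Finset.sum_le_sum
  intro i _
  rw [Real.dist_eq, sq_abs]
  have hz : ((y i - x i).natAbs : ℤ) ≤ (y i - x i)^2 := by
    rw [← Int.natAbs_sq (y i - x i)]
    exact_mod_cast Nat.le_self_pow (by norm_num) _
  have hr : ((((y i - x i).natAbs : ℤ)):ℝ) ≤ (((y i - x i)^2 : ℤ) : ℝ) := by exact_mod_cast hz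
  push_cast at hr
  have he : (toE x i - toE y i) = -(((y i):ℝ) - ((x i):ℝ)) := by
    show ((x i:ℝ)) - ((y i:ℝ)) = _
    ring
  rw [he]
  have hg : (((y i - x i).natAbs : ℕ) : ℝ) = |((y i : ℝ)) - ((x i : ℝ))| := by
    rw [Nat.cast_natAbs]
    push_cast
    ring_nf
  rw [hg]
  nlinarith [hr]

lemma crossing {A : Set (EuclideanSpace ℝ (Fin d))} (hA : IsOpen A)
    {a b : EuclideanSpace ℝ (Fin d)} (ha : a ∉ A) (hb : b ∈ A) :
    ∃ w ∈ frontier A, dist a w ≤ dist a b := by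
  have hseg : IsPreconnected (segment ℝ a b) := (convex_segment a b).isPreconnected
  have hfr : (segment ℝ a b ∩ frontier A).Nonempty := by
    by_contra hem
    rw [not_nonempty_iff_eq_empty] at hem
    have hsub : segment ℝ a b ⊆ A ∪ (closure A)ᶜ := by
      intro z hz
      by_cases hzc : z ∈ closure A
      · left
        by_contra hzA
        have hzf : z ∈ frontier A := by rw [hA.frontier_eq]; exact ⟨hzc, hzA⟩
        exact eq_empty_iff_forall_notMem.mp hem z ⟨hz, hzf⟩
      · right; exact hzc
    have hdisj : Disjoint A (closure A)ᶜ :=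
      disjoint_compl_right.mono_left subset_closure
    rcases hseg.subset_or_subset hA (isClosed_closure.isOpen_compl) hdisj hsub with h | h
    · exact ha (h (left_mem_segment ℝ a b))
    · exact (h (right_mem_segment ℝ a b)) (subset_closure hb)
  obtain ⟨w, hws, hwf⟩ := hfr
  refine ⟨w, hwf, ?_⟩
  have : segment ℝ a b ⊆ closedBall a (dist a b) := by
    apply (convex_closedBall a (dist a b)).segment_subset
    · simp [mem_closedBall, dist_nonneg]
    · simp [mem_closedBall, dist_comm]
  have := this hws
  rw [mem_closedBall, dist_comm] at this
  exact this

lemma incone {s : ℝ} (hs : 0 < s) {u ζ w : EuclideanSpace ℝ (Fin d)} (hu : ‖u‖ = 1)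
    (h : ‖ζ‖^2 ≤ 2*s*(inner ℝ u ζ : ℝ)) : dist (w + ζ) (w + s • u) ≤ s := by
  have h1 : dist (w + ζ) (w + s • u) = ‖ζ - s • u‖ := by
    rw [dist_eq_norm]; congr 1; abel
  rw [h1]
  have h2 : ‖ζ - s • u‖^2 = ‖ζ‖^2 - 2*s*(inner ℝ u ζ : ℝ) + s^2 := by
    rw [norm_sub_sq_real, real_inner_smul_right, norm_smul, Real.norm_eq_abs,
      abs_of_pos hs, hu, real_inner_comm]
    ring
  nlinarith [norm_nonneg (ζ - s • u)]

lemma lower {s : ℝ} (hs : 0 ≤ s) {u ξ : EuclideanSpace ℝ (Fin d)} (hu : ‖u‖ = 1)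
    (h : s ≤ ‖ξ + s • u‖) : -‖ξ‖^2 ≤ 2*s*(inner ℝ u ξ : ℝ) := by
  have h2 : ‖ξ + s • u‖^2 = ‖ξ‖^2 + 2*s*(inner ℝ u ξ : ℝ) + s^2 := by
    rw [norm_add_sq_real, real_inner_smul_right, norm_smul, Real.norm_eq_abs,
      abs_of_nonneg hs, hu, real_inner_comm]
    ring
  nlinarith [norm_nonneg (ξ + s • u)]

lemma exists_coord (hd : 1 ≤ d) {u : EuclideanSpace ℝ (Fin d)} (hu : ‖u‖ = 1) :
    ∃ j : Fin d, 1/(d:ℝ) ≤ (u j)^2 := by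
  have hsum : (∑ i, ‖u i‖^2) = 1 := by
    rw [EuclideanSpace.norm_eq] at hu
    exact Real.sqrt_eq_one.mp hu
  have hd0 : (0:ℝ) < d := by exact_mod_cast hd
  have hconst : (∑ _i : Fin d, 1/(d:ℝ)) = 1 := by
    rw [Finset.sum_const, Finset.card_univ, Fintype.card_fin, nsmul_eq_mul]
    field_simp
  have hle : (∑ _i : Fin d, 1/(d:ℝ)) ≤ ∑ i, ‖u i‖^2 := by rw [hconst, hsum]
  obtain ⟨j, _, hj⟩ := Finset.exists_le_of_sum_le (Finset.univ_nonempty_iff.mpr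
    (Fin.pos_iff_nonempty.mp hd)) hle
  exact ⟨j, by simpa [Real.norm_eq_abs, sq_abs] using hj⟩

lemma tangent {s : ℝ} (hs : 0 < s) (hd : 1 ≤ d) {A : Set (EuclideanSpace ℝ (Fin d))}
    (hA : SReg d s A) {w : EuclideanSpace ℝ (Fin d)} (hw : w ∈ frontier A) :
    ∃ u : EuclideanSpace ℝ (Fin d), ‖u‖ = 1 ∧
      ball (w - s • u) s ⊆ A ∧ closedBall (w + s • u) s ⊆ Aᶜ := by
  obtain ⟨cin, cout, hin, hout, hfin, hfout⟩ := hA.2 w hw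
  have hwin : w ∈ closedBall cin s := by
    have : w ∈ frontier A ∩ closedBall cin s := hfin ▸ rfl
    exact this.2
  have hwout : w ∈ closedBall cout s := by
    have : w ∈ frontier A ∩ closedBall cout s := hfout ▸ rfl
    exact this.2
  have hfr : frontier A = closure A \ A := hA.1.frontier_eq
  have hdisj : closedBall cin s ∩ closedBall cout s ⊆ {w} := by
    rintro z ⟨hz1, hz2⟩
    have hzf : z ∈ frontier A := by
      rw [hfr]
      exact ⟨hin hz1, hout hz2⟩
    have : z ∈ frontier A ∩ closedBall cin s := ⟨hzf, hz1⟩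
    rwa [hfin] at this
  have hcc : dist cin cout = 2 * s := by
    rcases lt_or_ge (dist cin cout) (2 * s) with hlt | hge
    · exfalso
      set p := midpoint ℝ cin cout with hp
      set ε := s - dist cin cout / 2 with hε
      have hεpos : 0 < ε := by rw [hε]; linarith
      set E₀ : EuclideanSpace ℝ (Fin d) := EuclideanSpace.single ⟨0, hd⟩ (1:ℝ) with hE
      have hE0 : ‖E₀‖ = 1 := by rw [hE, EuclideanSpace.norm_single]; norm_num
      set p' := p + ε • E₀ with hp'
      have hpp' : dist p' p = ε := by
        rw [hp', dist_eq_norm, add_sub_cancel_left, norm_smul, hE0, Real.norm_eq_abs,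
          abs_of_pos hεpos, mul_one]
      have hpin : dist p cin ≤ s := by
        rw [hp, dist_comm]
        rw [dist_left_midpoint]
        rw [Real.norm_ofNat]
        linarith [dist_nonneg (x := cin) (y := cout)]
      have hpout : dist p cout ≤ s := by
        rw [hp]
        rw [dist_midpoint_right]
        rw [Real.norm_ofNat]
        linarith [dist_nonneg (x := cin) (y := cout)]
      have hp'in : dist p' cin ≤ s := by
        calc dist p' cin ≤ dist p' p + dist p cin := dist_triangle _ _ _
        _ ≤ ε + (dist cin cout / 2) := by
            rw [hpp']
            gcongr
            rw [hp, dist_comm, dist_left_midpoint, Real.norm_ofNat]; linarith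
        _ = s := by rw [hε]; ring
      have hp'out : dist p' cout ≤ s := by
        calc dist p' cout ≤ dist p' p + dist p cout := dist_triangle _ _ _
        _ ≤ ε + (dist cin cout / 2) := by
            rw [hpp']
            gcongr
            rw [hp, dist_midpoint_right, Real.norm_ofNat]; linarith
        _ = s := by rw [hε]; ring
      have h1 : p ∈ ({w} : Set _) := hdisj ⟨mem_closedBall.mpr hpin, mem_closedBall.mpr hpout⟩
      have h2 : p' ∈ ({w} : Set _) := hdisj ⟨mem_closedBall.mpr hp'in, mem_closedBall.mpr hp'out⟩
      have : p = p' := by rw [mem_singleton_iff] at h1 h2; rw [h1, h2]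
      rw [← this] at hpp'
      simp at hpp'
      linarith
    · refine le_antisymm ?_ hge
      calc dist cin cout ≤ dist cin w + dist w cout := dist_triangle _ _ _
      _ ≤ s + s := by
          gcongr
          · rw [dist_comm]; exact mem_closedBall.mp hwin
          · exact mem_closedBall.mp hwout
      _ = 2 * s := by ring
  have hwcin : dist w cin = s := by
    have h1 : dist w cin ≤ s := mem_closedBall.mp hwin
    have h2 : dist w cout ≤ s := mem_closedBall.mp hwout
    have h3 := dist_triangle cin w cout
    rw [hcc, dist_comm cin w] at h3
    linarith
  have hwcout : dist w cout = s := by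
    have h1 : dist w cin ≤ s := mem_closedBall.mp hwin
    have h2 : dist w cout ≤ s := mem_closedBall.mp hwout
    have h3 := dist_triangle cin w cout
    rw [hcc, dist_comm cin w] at h3
    linarith
  -- w is the midpoint: (w - cin) + (w - cout) = 0
  have hmid : w - cin = cout - w := by
    have hpar := parallelogram_law_with_norm ℝ (w - cin) (w - cout)
    have ha : ‖w - cin‖ = s := by rw [← dist_eq_norm]; exact hwcin
    have hb : ‖w - cout‖ = s := by rw [← dist_eq_norm]; exact hwcout
    have hab : ‖(w - cin) - (w - cout)‖ = 2 * s := by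
      have : (w - cin) - (w - cout) = cout - cin := by abel
      rw [this, ← dist_eq_norm, dist_comm]; exact hcc
    have hz : ‖(w - cin) + (w - cout)‖ ^ 2 = 0 := by
      rw [ha, hb, hab] at hpar; nlinarith
    have hz2 : (w - cin) + (w - cout) = 0 := by
      have := pow_eq_zero_iff (n := 2) (by norm_num) |>.mp hz
      exact norm_eq_zero.mp this
    have : w - cin = -(w - cout) := by
      rw [eq_neg_iff_add_eq_zero]; exact hz2
    rw [this]; abel
  set u : EuclideanSpace ℝ (Fin d) := s⁻¹ • (cout - w) with hu
  have hnu : ‖u‖ = 1 := by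
    rw [hu, norm_smul, Real.norm_eq_abs, abs_of_pos (inv_pos.mpr hs), ← dist_eq_norm,
      dist_comm, hwcout]
    field_simp
  have hsu : s • u = cout - w := by
    rw [hu, smul_smul, mul_inv_cancel₀ (ne_of_gt hs), one_smul]
  have hcoutw : w + s • u = cout := by rw [hsu]; abel
  have hcinw : w - s • u = cin := by rw [hsu, ← hmid]; abel
  refine ⟨u, hnu, ?_, ?_⟩
  · rw [hcinw]
    intro z hz
    by_contra hzA
    have hzc : z ∈ closure A := hin (ball_subset_closedBall hz)
    have hzf : z ∈ frontier A := by rw [hfr]; exact ⟨hzc, hzA⟩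
    have : z ∈ frontier A ∩ closedBall cin s := ⟨hzf, ball_subset_closedBall hz⟩
    rw [hfin, mem_singleton_iff] at this
    subst this
    rw [mem_ball] at hz
    rw [hwcin] at hz
    exact lt_irrefl _ hz
  · rw [hcoutw]; exact hout
lemma toE_decomp (b z : ZD d) (j : Fin d) (hoff : ∀ i, i ≠ j → z i = b i) :
    toE z = toE b + EuclideanSpace.single j ((z j - b j : ℤ) : ℝ) := by
  ext i
  rw [PiLp.add_apply]
  by_cases hij : i = j
  · subst hij
    rw [EuclideanSpace.single_apply, if_pos rfl]
    show ((z i : ℝ)) = (b i : ℝ) + ((z i - b i : ℤ) : ℝ)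
    push_cast; ring
  · rw [EuclideanSpace.single_apply, if_neg hij]
    show ((z i : ℝ)) = (b i : ℝ) + 0
    rw [hoff i hij]; ring

set_option maxHeartbeats 1000000 in
/-- Points strictly "above" a non-`A` base point `b` (in the `σ eⱼ` direction)
stay out of `A`. -/
lemma colGood (hd : 1 ≤ d) {s : ℝ} (hs : 0 < s) (hs' : 1000000*(d:ℝ)^3 ≤ s)
    {A : Set (EuclideanSpace ℝ (Fin d))} {w u : EuclideanSpace ℝ (Fin d)} (hu : ‖u‖ = 1)
    (hin : ball (w - s•u) s ⊆ A) (hout : closedBall (w + s•u) s ⊆ Aᶜ)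
    {b : ZD d} (hb : toE b ∉ A) (hbw : ‖toE b - w‖ ≤ 6*Real.sqrt d)
    {j : Fin d} {σ : ℤ} (hσ : σ = 1 ∨ σ = -1)
    (hβ : 1 ≤ Real.sqrt d * ((σ:ℝ) * u j)) :
    ∀ z : ZD d, (∀ i, i ≠ j → z i = b i) → 0 ≤ σ*(z j - b j) → σ*(z j - b j) ≤ 7*d →
      toE z ∉ A := by
  intro z hoff hge hle
  set δ := Real.sqrt d with hδ
  have hd0 : (0:ℝ) < d := by exact_mod_cast hd
  have hδ2 : δ^2 = d := Real.sq_sqrt (le_of_lt hd0)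
  have hδ1 : 1 ≤ δ := by
    rw [hδ, show (1:ℝ) = Real.sqrt 1 by simp]
    exact Real.sqrt_le_sqrt (by exact_mod_cast hd)
  have hδd : δ ≤ d := by nlinarith
  by_cases hzb : z = b
  · rw [hzb]; exact hb
  -- z ≠ b : it differs from b only at j, at integer offset σ*t with 1 ≤ t ≤ 7d
  have hzj : z j ≠ b j := by
    intro hh
    apply hzb
    funext i
    by_cases hij : i = j
    · rw [hij]; exact hh
    · exact hoff i hij
  set t : ℤ := σ*(z j - b j) with ht
  have ht1 : 1 ≤ t := by
    rcases hσ with h | h <;> rw [h] at ht <;> omega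
  have ht7 : (t:ℝ) ≤ 7*d := by exact_mod_cast hle
  have htR : (1:ℝ) ≤ (t:ℝ) := by exact_mod_cast ht1
  have hc : ((z j - b j : ℤ) : ℝ) = (σ:ℝ) * (t:ℝ) := by
    have hcc : σ * t = z j - b j := by rcases hσ with h | h <;> rw [h] at ht ⊢ <;> omega
    rw [← hcc]; push_cast; ring
  -- decompose
  set ξ := toE b - w with hξ
  set ζ := toE z - w with hζ
  have hζeq : ζ = ξ + EuclideanSpace.single j ((z j - b j : ℤ) : ℝ) := by
    rw [hζ, hξ, toE_decomp b z j hoff]; abel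
  -- lower bound on 2s⟪u,ξ⟫
  have hbnotball : toE b ∉ ball (w - s•u) s := fun hmem => hb (hin hmem)
  have hlow : -‖ξ‖^2 ≤ 2*s*(inner ℝ u ξ : ℝ) := by
    apply lower (le_of_lt hs) hu
    have h1 : toE b - (w - s•u) = ξ + s•u := by rw [hξ]; abel
    have := hbnotball
    rw [mem_ball, not_lt, dist_eq_norm, h1] at this
    exact this
  -- inner product of ζ with u
  have hinnerζ : (inner ℝ u ζ : ℝ) = (inner ℝ u ξ : ℝ) + (t:ℝ) * ((σ:ℝ) * u j) := by
    rw [hζeq, inner_add_right]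
    congr 1
    have : (inner ℝ u (EuclideanSpace.single j ((z j - b j : ℤ) : ℝ)) : ℝ)
        = ((z j - b j : ℤ) : ℝ) * u j := by
      rw [EuclideanSpace.inner_single_right]
      simp [mul_comm]
    rw [this, hc]; ring
  -- norm bound
  have hnζ : ‖ζ‖ ≤ 6*δ + (t:ℝ) := by
    rw [hζeq]
    refine le_trans (norm_add_le _ _) (add_le_add hbw ?_)
    rw [EuclideanSpace.norm_single, Real.norm_eq_abs, ← Int.cast_abs]
    have habs : |z j - b j| = t := by
      rcases hσ with h | h
      · have h2 : t = z j - b j := by rw [ht, h]; ring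
        rw [h2]; exact abs_of_nonneg (by omega)
      · have h2 : t = -(z j - b j) := by rw [ht, h]; ring
        rw [abs_of_nonpos (by omega)]; omega
    rw [habs]
  -- main numeric estimate
  set β := (σ:ℝ) * u j with hβdef
  have hβ0 : 0 ≤ β := by
    by_contra hcon
    push_neg at hcon
    nlinarith
  have hξ2 : ‖ξ‖^2 ≤ 36*(d:ℝ) := by nlinarith [hbw, norm_nonneg ξ, hδ2]
  have hkey : ‖ζ‖^2 ≤ 2*s*(inner ℝ u ζ : ℝ) := by
    have hstep : ((6*δ+(t:ℝ))^2 + 36*d) * δ ≤ (2*s*(t:ℝ)*β) * δ := by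
      have e1 : ((6*δ+(t:ℝ))^2 + 36*d) * δ ≤ ((6*δ+(t:ℝ))^2 + 36*d) * d := by
        have : (0:ℝ) ≤ (6*δ+(t:ℝ))^2 + 36*d := by positivity
        nlinarith
      have p1 : δ*(t:ℝ) ≤ (d:ℝ)*(t:ℝ) := by nlinarith
      have p2 : (t:ℝ)^2 ≤ 7*(d:ℝ)*(t:ℝ) := by nlinarith
      have p3 : (d:ℝ) ≤ (d:ℝ)*(t:ℝ) := by nlinarith
      have e2 : ((6*δ+(t:ℝ))^2 + 36*d) * d ≤ 122*(d:ℝ)^2*(t:ℝ) := by nlinarith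
      have e3 : 122*(d:ℝ)^2*(t:ℝ) ≤ 2*s*(t:ℝ) := by
        have q1 : (d:ℝ)^2 ≤ (d:ℝ)^3 := by nlinarith
        have q2 : 122*(d:ℝ)^2 ≤ 2*s := by nlinarith
        nlinarith
      have e4 : 2*s*(t:ℝ) ≤ (2*s*(t:ℝ)*β) * δ := by
        have h9 : (0:ℝ) ≤ 2*s*(t:ℝ) := by positivity
        nlinarith [mul_le_mul_of_nonneg_left hβ h9]
      linarith
    have hmain : (6*δ+(t:ℝ))^2 + 36*d ≤ 2*s*(t:ℝ)*β :=
      le_of_mul_le_mul_right (by linarith) (by linarith : (0:ℝ) < δ)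
    have hnζ2 : ‖ζ‖^2 ≤ (6*δ+(t:ℝ))^2 := by nlinarith [norm_nonneg ζ]
    rw [hinnerζ]
    nlinarith
  have : toE z ∈ closedBall (w + s•u) s := by
    have := incone hs hu hkey (w := w)
    rw [mem_closedBall]
    have hwζ : w + ζ = toE z := by rw [hζ]; abel
    rwa [hwζ] at this
  exact hout this


set_option maxHeartbeats 1000000 in
lemma midGood (hd : 1 ≤ d) {s : ℝ} (hs : 0 < s) (hs' : 1000000*(d:ℝ)^3 ≤ s)
    {A : Set (EuclideanSpace ℝ (Fin d))} {w u : EuclideanSpace ℝ (Fin d)} (hu : ‖u‖ = 1)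
    (hin : ball (w - s•u) s ⊆ A) (hout : closedBall (w + s•u) s ⊆ Aᶜ)
    {x : ZD d} (hxA : toE x ∉ A) (hxw : ‖toE x - w‖ ≤ 3*Real.sqrt d)
    {j : Fin d} {σ : ℤ} (hσ : σ = 1 ∨ σ = -1)
    (hβ : 1 ≤ Real.sqrt d * ((σ:ℝ) * u j)) :
    ∀ (z : ZD d) (v : EuclideanSpace ℝ (Fin d)),
      toE z = toE x + EuclideanSpace.single j ((7*d*σ : ℤ) : ℝ) + v →
      ‖v‖ ≤ 3*Real.sqrt d → toE z ∉ A := by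
  intro z v hdec hv
  set δ := Real.sqrt d with hδ
  have hd0 : (0:ℝ) < d := by exact_mod_cast hd
  have hδ2 : δ^2 = d := Real.sq_sqrt (le_of_lt hd0)
  have hδ1 : 1 ≤ δ := by
    rw [hδ, show (1:ℝ) = Real.sqrt 1 by simp]
    exact Real.sqrt_le_sqrt (by exact_mod_cast hd)
  have hδd : δ ≤ d := by nlinarith
  set β := (σ:ℝ) * u j with hβdef
  have hβ0 : 0 ≤ β := by
    by_contra hcon
    push_neg at hcon
    nlinarith
  set ξ := toE x - w with hξ
  set ζ := toE z - w with hζ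
  have hζeq : ζ = ξ + EuclideanSpace.single j ((7*d*σ : ℤ) : ℝ) + v := by
    rw [hζ, hξ, hdec]; abel
  have hbnotball : toE x ∉ ball (w - s•u) s := fun hmem => hxA (hin hmem)
  have hlow : -‖ξ‖^2 ≤ 2*s*(inner ℝ u ξ : ℝ) := by
    apply lower (le_of_lt hs) hu
    have h1 : toE x - (w - s•u) = ξ + s•u := by rw [hξ]; abel
    have h2 := hbnotball
    rw [mem_ball, not_lt, dist_eq_norm, h1] at h2
    exact h2
  have hcast : ((7*d*σ : ℤ) : ℝ) * u j = 7*(d:ℝ)*β := by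
    rw [hβdef]; push_cast; ring
  have hinnerζ : (inner ℝ u ζ : ℝ)
      = (inner ℝ u ξ : ℝ) + 7*(d:ℝ)*β + (inner ℝ u v : ℝ) := by
    rw [hζeq, inner_add_right, inner_add_right]
    congr 1
    congr 1
    rw [EuclideanSpace.inner_single_right]
    simpa [mul_comm] using hcast
  have hiv : -(3*δ) ≤ (inner ℝ u v : ℝ) := by
    have h1 := abs_real_inner_le_norm u v
    rw [hu, one_mul] at h1
    have h2 := neg_abs_le (inner ℝ u v : ℝ)
    have h3 := abs_le.mp (le_refl |((inner ℝ u v : ℝ))|)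
    nlinarith [abs_nonneg (inner ℝ u v : ℝ)]
  have hsingle : ‖EuclideanSpace.single j (((7*d*σ : ℤ) : ℝ))‖ = 7*(d:ℝ) := by
    rw [EuclideanSpace.norm_single, Real.norm_eq_abs]
    rcases hσ with h | h <;> rw [h] <;> push_cast <;>
      simp [abs_of_nonneg (by positivity : (0:ℝ) ≤ 7*(d:ℝ))]
  have hnζ : ‖ζ‖ ≤ 6*δ + 7*(d:ℝ) := by
    rw [hζeq]
    refine le_trans (norm_add_le _ _) ?_
    refine le_trans (add_le_add_left (norm_add_le _ _) _) ?_
    rw [hsingle]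
    linarith [hxw, hv]
  -- numeric core
  have hξ2 : ‖ξ‖^2 ≤ 9*(d:ℝ) := by nlinarith [hxw, norm_nonneg ξ, hδ2]
  have h4 : (4:ℝ) ≤ 7*(d:ℝ)*β - 3*δ := by
    have q1 : (4:ℝ)*δ ≤ (7*(d:ℝ)*β - 3*δ)*δ := by
      have q2 : 7*(d:ℝ)*(δ*β) ≥ 7*(d:ℝ) :=
        by nlinarith [mul_le_mul_of_nonneg_left hβ (by positivity : (0:ℝ) ≤ 7*(d:ℝ))]
      nlinarith
    exact le_of_mul_le_mul_right (by linarith) (by linarith : (0:ℝ) < δ)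
  have hA1 : ‖ζ‖^2 ≤ 169*(d:ℝ)^2 := by nlinarith [norm_nonneg ζ, hnζ]
  have hA2 : 169*(d:ℝ)^2 + 9*(d:ℝ) ≤ 8*s := by nlinarith [sq_nonneg ((d:ℝ) - 1)]
  have hkey : ‖ζ‖^2 ≤ 2*s*(inner ℝ u ζ : ℝ) := by
    rw [hinnerζ]
    have hA4 : 2*s*(inner ℝ u v : ℝ) ≥ -(2*s*(3*δ)) := by nlinarith
    have hA5 : 2*s*(7*(d:ℝ)*β) - 2*s*(3*δ) ≥ 8*s := by nlinarith
    nlinarith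
  have hmem : toE z ∈ closedBall (w + s•u) s := by
    have h9 := incone hs hu hkey (w := w)
    rw [mem_closedBall]
    have hwζ : w + ζ = toE z := by rw [hζ]; abel
    rwa [hwζ] at h9
  exact hout hmem

end PT
set_option maxHeartbeats 2000000 in
/-- **Local connectivity of the complement of the discretization of a regular set**
(Lemma 6.4 of Popov–Teixeira, "Soft local times and decoupling of random
interlacements"). -/
theorem stmt_12 (d : ℕ) (hd : 1 ≤ d) :
    ∃ (s₀ : ℝ) (h₀ : ℕ), 0 < s₀ ∧
      ∀ s : ℝ, s₀ ≤ s →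
      ∀ A : Set (EuclideanSpace ℝ (Fin d)), SReg d s A →
      ∀ x y : ZD d, toE x ∉ A → toE y ∉ A →
        dist (toE x) (toE y) ≤ 3 * Real.sqrt d →
        ∃ n ≤ h₀, ∃ p : ℕ → ZD d,
          p 0 = x ∧ p n = y ∧ (∀ k < n, latAdj (p k) (p (k + 1))) ∧
          ∀ k ≤ n, toE (p k) ∉ A := by
  have hd0 : (0:ℝ) < d := by exact_mod_cast hd
  refine ⟨1000000*(d:ℝ)^3, 23*d, by positivity, ?_⟩
  intro s hs A hA x y hx hy hxy
  set δ := Real.sqrt d with hδ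
  have hδ2 : δ^2 = d := Real.sq_sqrt hd0.le
  have hδ1 : 1 ≤ δ := by
    rw [hδ, show (1:ℝ) = Real.sqrt 1 by simp]
    exact Real.sqrt_le_sqrt (by exact_mod_cast hd)
  have hδd : δ ≤ d := by nlinarith
  have hs0 : (0:ℝ) < s := lt_of_lt_of_le (by positivity) hs
  have hdistsq : dist (toE x) (toE y)^2 ≤ 9*(d:ℝ) := by
    nlinarith [dist_nonneg (x := toE x) (y := toE y), hδ2, hxy]
  by_cases hc : ∃ a ∈ A, dist (toE x) a ≤ 3*δ
  · -- near the boundary: go around through the outer tangent ball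
    obtain ⟨a, haA, hax⟩ := hc
    obtain ⟨w, hwf, hww⟩ := PT.crossing hA.1 hx haA
    have hxw : ‖toE x - w‖ ≤ 3*δ := by
      rw [← dist_eq_norm]; exact le_trans hww hax
    obtain ⟨u, hnu, hin, hout⟩ := PT.tangent hs0 hd hA hwf
    obtain ⟨j, hj⟩ := PT.exists_coord hd hnu
    set σ : ℤ := if 0 ≤ u j then 1 else -1 with hσdef
    have hσ : σ = 1 ∨ σ = -1 := by rw [hσdef]; split_ifs <;> simp
    have hβ0 : 0 ≤ (σ:ℝ) * u j := by
      rw [hσdef]; split_ifs with h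
      · push_cast; linarith
      · push_neg at h; push_cast; nlinarith
    have hβ : 1 ≤ δ * ((σ:ℝ) * u j) := by
      have hsq1 : ((σ:ℝ))^2 = 1 := by rcases hσ with h|h <;> rw [h] <;> norm_num
      have hsq : 1/(d:ℝ) ≤ ((σ:ℝ) * u j)^2 := by rw [mul_pow, hsq1, one_mul]; exact hj
      have hc2 : 1 ≤ (δ * ((σ:ℝ) * u j))^2 := by
        rw [mul_pow, hδ2]
        calc (1:ℝ) = d * (1/d) := by field_simp
        _ ≤ d * ((σ:ℝ)*u j)^2 := mul_le_mul_of_nonneg_left hsq hd0.le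
      nlinarith [mul_nonneg (Real.sqrt_nonneg (d:ℝ)) hβ0]
    set x2 := Function.update x j (x j + 7*(d:ℤ)*σ) with hx2
    set y2 := Function.update y j (y j + 7*(d:ℤ)*σ) with hy2
    have hsumx : (∑ i, (x2 i - x i).natAbs) = 7*d := by
      rw [hx2, Finset.sum_eq_single j]
      · rw [Function.update_self]
        rcases hσ with h|h <;> rw [h] <;> omega
      · intro i _ hij
        rw [Function.update_of_ne hij]; omega
      · intro hj2; exact absurd (Finset.mem_univ j) hj2
    have hsumy : (∑ i, (y i - y2 i).natAbs) = 7*d := by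
      rw [hy2, Finset.sum_eq_single j]
      · rw [Function.update_self]
        rcases hσ with h|h <;> rw [h] <;> omega
      · intro i _ hij
        rw [Function.update_of_ne hij]; omega
      · intro hj2; exact absurd (Finset.mem_univ j) hj2
    have hyw : ‖toE y - w‖ ≤ 6*δ := by
      have hsplit : toE y - w = (toE y - toE x) + (toE x - w) := by abel
      rw [hsplit]
      refine le_trans (norm_add_le _ _) ?_
      have h1 : ‖toE y - toE x‖ ≤ 3*δ := by
        rw [← dist_eq_norm, dist_comm]; exact hxy
      linarith
    have hxw6 : ‖toE x - w‖ ≤ 6*δ := by linarith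
    have hcolx := PT.colGood hd hs0 hs hnu hin hout hx hxw6 hσ hβ
    have hcoly := PT.colGood hd hs0 hs hnu hin hout hy hyw hσ hβ
    obtain ⟨p1, h10, h1n, h1adj, h1btw⟩ := PT.monoPath (7*d) x x2 hsumx
    have g1 : PT.GoodPath A x x2 (7*d) := by
      refine ⟨p1, h10, h1n, h1adj, fun k hk => ?_⟩
      have h5 := h1btw k hk j
      rw [hx2, Function.update_self] at h5
      refine hcolx (p1 k) (fun i hij => ?_) ?_ ?_
      · have h6 := h1btw k hk i
        rw [hx2, Function.update_of_ne hij] at h6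
        omega
      · rcases hσ with h|h <;> rw [h] at h5 ⊢ <;> omega
      · rcases hσ with h|h <;> rw [h] at h5 ⊢ <;> omega
    obtain ⟨p3, h30, h3n, h3adj, h3btw⟩ := PT.monoPath (7*d) y2 y hsumy
    have g3 : PT.GoodPath A y2 y (7*d) := by
      refine ⟨p3, h30, h3n, h3adj, fun k hk => ?_⟩
      have h5 := h3btw k hk j
      rw [hy2, Function.update_self] at h5
      refine hcoly (p3 k) (fun i hij => ?_) ?_ ?_
      · have h6 := h3btw k hk i
        rw [hy2, Function.update_of_ne hij] at h6
        omega
      · rcases hσ with h|h <;> rw [h] at h5 ⊢ <;> omega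
      · rcases hσ with h|h <;> rw [h] at h5 ⊢ <;> omega
    set N2 := ∑ i, (y2 i - x2 i).natAbs with hN2def
    obtain ⟨p2, h20, h2n, h2adj, h2btw⟩ := PT.monoPath N2 x2 y2 rfl
    have hx2E : toE x2 = toE x + EuclideanSpace.single j ((7*(d:ℤ)*σ : ℤ) : ℝ) := by
      have hdec := PT.toE_decomp x x2 j (fun i hij => by rw [hx2, Function.update_of_ne hij])
      have harg : (x2 j - x j) = 7*(d:ℤ)*σ := by rw [hx2, Function.update_self]; ring
      rw [hdec, harg]
    have hyx : toE y2 - toE x2 = toE y - toE x := by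
      ext i
      simp only [PiLp.sub_apply]
      by_cases hij : i = j
      · subst hij
        show ((y2 i : ℤ):ℝ) - ((x2 i : ℤ):ℝ) = ((y i : ℤ):ℝ) - ((x i : ℤ):ℝ)
        rw [hy2, hx2, Function.update_self, Function.update_self]
        push_cast; ring
      · show ((y2 i : ℤ):ℝ) - ((x2 i : ℤ):ℝ) = ((y i : ℤ):ℝ) - ((x i : ℤ):ℝ)
        rw [hy2, hx2, Function.update_of_ne hij, Function.update_of_ne hij]
    have hdistxy : ‖toE y - toE x‖ ≤ 3*δ := by
      rw [← dist_eq_norm, dist_comm]; exact hxy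
    have g2 : PT.GoodPath A x2 y2 N2 := by
      refine ⟨p2, h20, h2n, h2adj, fun k hk => ?_⟩
      have hbtw : PT.Btw x2 y2 (p2 k) := fun i => h2btw k hk i
      have hv : ‖toE (p2 k) - toE x2‖ ≤ 3*δ :=
        le_trans (PT.norm_sub_le_of_btw hbtw) (by rw [hyx]; exact hdistxy)
      refine PT.midGood hd hs0 hs hnu hin hout hx hxw hσ hβ (p2 k)
        (toE (p2 k) - toE x2) ?_ hv
      rw [← hx2E]; abel
    have hN2d : ((N2:ℕ):ℝ) ≤ 9*(d:ℝ) := by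
      have h1 := PT.sum_natAbs_le_dist_sq x2 y2
      have h2 : dist (toE x2) (toE y2) = dist (toE x) (toE y) := by
        rw [dist_eq_norm, dist_eq_norm,
          show toE x2 - toE y2 = -(toE y2 - toE x2) by abel, norm_neg, hyx,
          show toE y - toE x = -(toE x - toE y) by abel, norm_neg]
      rw [h2] at h1
      linarith
    have hN2n : N2 ≤ 9*d := by
      have h9 : ((N2:ℕ):ℝ) ≤ ((9*d : ℕ):ℝ) := by push_cast; linarith
      exact_mod_cast h9
    have g := (g1.trans g2).trans g3
    exact ⟨7*d + N2 + 7*d, by omega, g⟩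
  · -- far from A: direct monotone path
    push_neg at hc
    obtain ⟨p, hp0, hpN, hpadj, hpbtw⟩ :=
      PT.monoPath (∑ i, (y i - x i).natAbs) x y rfl
    have hNle : (∑ i, (y i - x i).natAbs) ≤ 23*d := by
      have h1 := PT.sum_natAbs_le_dist_sq x y
      have h9 : (((∑ i, (y i - x i).natAbs : ℕ)):ℝ) ≤ ((23*d : ℕ):ℝ) := by
        push_cast at h1 ⊢; nlinarith
      exact_mod_cast h9
    refine ⟨∑ i, (y i - x i).natAbs, hNle, p, hp0, hpN, hpadj, ?_⟩
    intro k hk hmem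
    have hb : ‖toE (p k) - toE x‖ ≤ ‖toE y - toE x‖ :=
      PT.norm_sub_le_of_btw (fun i => hpbtw k hk i)
    have hdd : dist (toE x) (toE (p k)) ≤ 3*δ := by
      rw [dist_eq_norm, show toE x - toE (p k) = -(toE (p k) - toE x) by abel, norm_neg]
      refine le_trans hb ?_
      rw [show toE y - toE x = -(toE x - toE y) by abel, norm_neg, ← dist_eq_norm]
      exact hxy
    have := hc (toE (p k)) hmem
    linarith
end
end
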